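/- Let {x^k} be generated by Algorithm 1. Then every accumulation point x* of the sequence {x^k} is a stationary point of the problem of minimizing F over s; that is, G(x*) = 0. -/

import Mathlib

open scoped RealInnerProductSpace

/-- The Frank–Wolfe gap `G(x) = sup_{v ∈ s} (⟪∇f(x), x − v⟫ + g(x) − g(v))`. -/
noncomputable def FWgap {E : Type*} [NormedAddCommGroup E] [InnerProductSpace ℝ E] [CompleteSpace E]
    (f g : E → ℝ) (s : Set E) (x : E) : ℝ :=
  ⨆ v : s, (⟪gradient f x, x - (v : E)⟫ + g x - g (v : E))


open Filter

set_option maxHeartbeats 1000000 in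
/-- **Theorem: subsequential convergence of Algorithm 1.**
Every accumulation point `x*` of the sequence `{x^k}` generated by Algorithm 1 is a
stationary point of the problem of minimizing `F` over `s`, i.e. `G(x*) = 0`. -/
theorem alg1_accumulation_points_stationary
    {E : Type*} [NormedAddCommGroup E] [InnerProductSpace ℝ E] [FiniteDimensional ℝ E]
    (s : Set E) (hs_ne : s.Nonempty) (hs_cl : IsClosed s) (hs_cv : Convex ℝ s)
    (g : E → ℝ) (hg_cv : ConvexOn ℝ s g) (hg_lsc : LowerSemicontinuousOn g s)
    (hg_sc : ∀ M : ℝ, ∃ R : ℝ, ∀ z ∈ s, R ≤ ‖z‖ → M ≤ g z / ‖z‖)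
    (f : E → ℝ) (hf : ∃ u : Set E, IsOpen u ∧ s ⊆ u ∧ ContDiffOn ℝ 1 f u)
    (hF_bdd : BddBelow ((fun z => f z + g z) '' s))
    (β σ p : ℝ) (hβ : β ∈ Set.Ioo (0 : ℝ) 1) (hσ : σ ∈ Set.Ioo (0 : ℝ) 1)
    (hp : p ∈ Set.Ioc (0 : ℝ) 1)
    (x v d : ℕ → E) (ik : ℕ → ℕ) (Fs ps : ℕ → ℝ)
    (hx0 : x 0 ∈ s)
    (hv : ∀ k, v k ∈ s ∧ ∀ w ∈ s,
      ⟪gradient f (x k), v k⟫ + g (v k) ≤ ⟪gradient f (x k), w⟫ + g w)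
    (hd : ∀ k, d k = v k - x k)
    (hik : ∀ k,
      (f (x k + β ^ ik k • d k) + g (x k + β ^ ik k • d k)
          ≤ Fs k - σ * β ^ ik k * FWgap f g s (x k))
      ∧ ∀ j < ik k,
        ¬ (f (x k + β ^ j • d k) + g (x k + β ^ j • d k)
          ≤ Fs k - σ * β ^ j * FWgap f g s (x k)))
    (hxsucc : ∀ k, x (k + 1) = x k + β ^ ik k • d k)
    (hF0 : Fs 0 = f (x 0) + g (x 0))
    (hps : ∀ k, ps (k + 1) ∈ Set.Icc p 1)
    (hFsucc : ∀ k, Fs (k + 1)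
      = ps (k + 1) * (f (x (k + 1)) + g (x (k + 1))) + (1 - ps (k + 1)) * Fs k)
    (xstar : E)
    (φ : ℕ → ℕ) (hφ : StrictMono φ)
    (hconv : Filter.Tendsto (fun k => x (φ k)) Filter.atTop (nhds xstar)) :
    FWgap f g s xstar = 0 := by
  obtain ⟨hβ0, hβ1⟩ := hβ
  obtain ⟨hσ0, hσ1⟩ := hσ
  obtain ⟨hp0, hp1⟩ := hp
  obtain ⟨u, hu_open, hsu, hfc1⟩ := hf
  haveI : Nonempty ↥s := hs_ne.to_subtype
  set G : ℕ → ℝ := fun k => ⟪gradient f (x k), x k - v k⟫ + g (x k) - g (v k) with hGdef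
  clear_value G
  -- iterates stay in s
  have hmem : ∀ (z w : E) (τ : ℝ), z ∈ s → w ∈ s → 0 ≤ τ → τ ≤ 1 → z + τ • (w - z) ∈ s := by
    intro z w τ hz hw h0 h1
    have h : z + τ • (w - z) = (1 - τ) • z + τ • w := by module
    rw [h]
    exact hs_cv hz hw (by linarith) h0 (by ring)
  have hxs : ∀ k, x k ∈ s := by
    intro k; induction k with
    | zero => exact hx0
    | succ n ihn =>
      rw [hxsucc n, hd n]
      exact hmem _ _ _ ihn (hv n).1 (pow_pos hβ0 _).le (pow_le_one₀ hβ0.le hβ1.le)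
  -- gap formula
  have hgap : ∀ k, FWgap f g s (x k) = G k := by
    intro k
    have hub : ∀ w : s, ⟪gradient f (x k), x k - (w : E)⟫ + g (x k) - g (w : E) ≤ G k := by
      rintro ⟨w, hw⟩
      have h2 := (hv k).2 w hw
      simp only [hGdef]
      rw [inner_sub_right, inner_sub_right]
      linarith
    rw [show FWgap f g s (x k)
        = ⨆ w : s, (⟪gradient f (x k), x k - (w : E)⟫ + g (x k) - g (w : E)) from rfl]
    refine le_antisymm (ciSup_le hub) ?_
    have hbdd : BddAbove (Set.range fun w : s =>
        ⟪gradient f (x k), x k - (w : E)⟫ + g (x k) - g (w : E)) :=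
      ⟨G k, Set.forall_mem_range.2 hub⟩
    have h3 := le_ciSup hbdd (⟨v k, (hv k).1⟩ : s)
    simpa [hGdef] using h3
  have hGnn : ∀ k, 0 ≤ G k := by
    intro k
    have h2 := (hv k).2 (x k) (hxs k)
    simp only [hGdef]
    rw [inner_sub_right]
    linarith
  -- descent facts
  have hσtG : ∀ k, 0 ≤ σ * β ^ ik k * G k :=
    fun k => mul_nonneg (mul_nonneg hσ0.le (pow_pos hβ0 _).le) (hGnn k)
  have hdesc : ∀ k, f (x (k + 1)) + g (x (k + 1)) ≤ Fs k - σ * β ^ ik k * G k := by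
    intro k
    have h1 := (hik k).1
    rw [hgap k] at h1
    rw [hxsucc k]
    exact h1
  have hFxFs : ∀ k, f (x k) + g (x k) ≤ Fs k := by
    intro k; induction k with
    | zero => rw [hF0]
    | succ n ihn =>
      have h1 : f (x (n + 1)) + g (x (n + 1)) ≤ Fs n := le_trans (hdesc n) (by linarith [hσtG n])
      rw [hFsucc n]
      have hpsn := hps n
      nlinarith [hpsn.1, hpsn.2, hp0]
  have hFs_succ_le : ∀ k, Fs (k + 1) ≤ Fs k := by
    intro k
    have h1 : f (x (k + 1)) + g (x (k + 1)) ≤ Fs k := le_trans (hdesc k) (by linarith [hσtG k])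
    rw [hFsucc k]
    have hpsk := hps k
    nlinarith [hpsk.1, hpsk.2, hp0]
  have hFs_anti : Antitone Fs := antitone_nat_of_succ_le hFs_succ_le
  -- lower bound
  have hm : ∀ k, sInf ((fun z => f z + g z) '' s) ≤ Fs k := by
    intro k
    exact le_trans (csInf_le hF_bdd ⟨x k, hxs k, rfl⟩) (hFxFs k)
  have hLten : Tendsto Fs atTop (nhds (⨅ i, Fs i)) :=
    tendsto_atTop_ciInf hFs_anti ⟨_, Set.forall_mem_range.2 hm⟩
  have hdiff : Tendsto (fun k => Fs k - Fs (k + 1)) atTop (nhds 0) := by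
    have h1 : Tendsto (fun k => Fs (k + 1)) atTop (nhds (⨅ i, Fs i)) :=
      hLten.comp (tendsto_add_atTop_nat 1)
    have h2 := hLten.sub h1
    simpa using h2
  have hkey : ∀ k, p * σ * (β ^ ik k * G k) ≤ Fs k - Fs (k + 1) := by
    intro k
    have h1 := hdesc k
    rw [hFsucc k]
    have hpsk := hps k
    nlinarith [hpsk.1, hpsk.2, hp0, hσtG k, hGnn k, (pow_pos hβ0 (ik k)).le]
  have htGlim : Tendsto (fun k => β ^ ik k * G k) atTop (nhds 0) := by
    have hnn : ∀ k, 0 ≤ p * σ * (β ^ ik k * G k) :=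
      fun k => mul_nonneg (mul_nonneg hp0.le hσ0.le)
        (mul_nonneg (pow_pos hβ0 _).le (hGnn k))
    have hsq : Tendsto (fun k => p * σ * (β ^ ik k * G k)) atTop (nhds 0) :=
      squeeze_zero hnn hkey hdiff
    have hne : p * σ ≠ 0 := by positivity
    have h3 := hsq.const_mul (p * σ)⁻¹
    rw [mul_zero] at h3
    refine Tendsto.congr (fun k => ?_) h3
    rw [inv_mul_cancel_left₀ hne]
  -- limit point in s
  have hxstar_s : xstar ∈ s :=
    hs_cl.mem_of_tendsto hconv (Filter.Eventually.of_forall fun k => hxs (φ k))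
  have hxstar_u : xstar ∈ u := hsu hxstar_s
  -- derivative continuity
  have hfderiv_cont : ContinuousOn (fderiv ℝ f) u :=
    hfc1.continuousOn_fderiv_of_isOpen hu_open le_rfl
  have hgrad_eq : ∀ z : E, gradient f z = (InnerProductSpace.toDual ℝ E).symm (fderiv ℝ f z) :=
    fun z => rfl
  have hgrad_cont : ContinuousOn (gradient f) u :=
    (InnerProductSpace.toDual ℝ E).symm.continuous.comp_continuousOn hfderiv_cont
  have hconva : Tendsto (fun k => gradient f (x (φ k))) atTop (nhds (gradient f xstar)) :=
    ((hgrad_cont.continuousAt (hu_open.mem_nhds hxstar_u)).tendsto).comp hconv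
  -- bounds along the subsequence
  obtain ⟨X, hX⟩ : ∃ X, ∀ k, ‖x (φ k)‖ ≤ X := by
    obtain ⟨X, hX⟩ := hconv.norm.bddAbove_range
    exact ⟨X, fun k => hX (Set.mem_range_self k)⟩
  have hX0 : 0 ≤ X := le_trans (norm_nonneg _) (hX 0)
  obtain ⟨A, hA⟩ : ∃ A, ∀ k, ‖gradient f (x (φ k))‖ ≤ A := by
    obtain ⟨A, hA⟩ := hconva.norm.bddAbove_range
    exact ⟨A, fun k => hA (Set.mem_range_self k)⟩
  have hA0 : 0 ≤ A := le_trans (norm_nonneg _) (hA 0)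
  have hcf : ContinuousAt f xstar :=
    hfc1.continuousOn.continuousAt (hu_open.mem_nhds hxstar_u)
  obtain ⟨Yf, hYf⟩ : ∃ Yf, ∀ k, Yf ≤ f (x (φ k)) := by
    obtain ⟨Yf, hYf⟩ := (hcf.tendsto.comp hconv).bddBelow_range
    exact ⟨Yf, fun k => hYf (Set.mem_range_self k)⟩
  have hgub : ∀ k, g (x (φ k)) ≤ Fs 0 - Yf := by
    intro k
    have h1 : f (x (φ k)) + g (x (φ k)) ≤ Fs 0 :=
      le_trans (hFxFs _) (hFs_anti (Nat.zero_le _))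
    have h2 := hYf k
    linarith
  -- bound on v along the subsequence
  obtain ⟨R, hR⟩ := hg_sc (A + 1)
  have hvD : ∀ k, ‖v (φ k)‖ ≤ max (max R 1) (A * X + (Fs 0 - Yf)) := by
    intro k
    by_cases hcs : ‖v (φ k)‖ ≤ max R 1
    · exact le_trans hcs (le_max_left _ _)
    · push_neg at hcs
      have hn1 : (1 : ℝ) ≤ ‖v (φ k)‖ := le_of_lt (lt_of_le_of_lt (le_max_right _ _) hcs)
      have hnR : R ≤ ‖v (φ k)‖ := le_of_lt (lt_of_le_of_lt (le_max_left _ _) hcs)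
      have hgv : (A + 1) * ‖v (φ k)‖ ≤ g (v (φ k)) := by
        have h5 := hR (v (φ k)) (hv (φ k)).1 hnR
        rw [le_div_iff₀ (by linarith : (0 : ℝ) < ‖v (φ k)‖)] at h5
        exact h5
      have hmin := (hv (φ k)).2 (x (φ k)) (hxs (φ k))
      have hinner1 : ⟪gradient f (x (φ k)), x (φ k)⟫ ≤ A * X :=
        le_trans (real_inner_le_norm _ _) (mul_le_mul (hA k) (hX k) (norm_nonneg _) hA0)
      have hinner2 : -(A * ‖v (φ k)‖) ≤ ⟪gradient f (x (φ k)), v (φ k)⟫ := by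
        have h6 := abs_real_inner_le_norm (gradient f (x (φ k))) (v (φ k))
        have h7 : ‖gradient f (x (φ k))‖ * ‖v (φ k)‖ ≤ A * ‖v (φ k)‖ :=
          mul_le_mul_of_nonneg_right (hA k) (norm_nonneg _)
        exact (abs_le.1 (le_trans h6 h7)).1
      have hgx := hgub k
      have h8 : ‖v (φ k)‖ ≤ A * X + (Fs 0 - Yf) := by linarith
      exact le_trans h8 (le_max_right _ _)
  set D := max (max R 1) (A * X + (Fs 0 - Yf)) with hDdef
  clear_value D
  have hD0 : (0 : ℝ) ≤ D := le_trans (norm_nonneg _) (hvD 0)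
  have hdd : ∀ k, ‖d (φ k)‖ ≤ D + X := by
    intro k
    rw [hd]
    exact le_trans (norm_sub_le _ _) (add_le_add (hvD k) (hX k))
  set Dd := D + X with hDddef
  have hDd0 : (0 : ℝ) ≤ Dd := by rw [hDddef]; exact add_nonneg hD0 hX0
  clear_value Dd
  -- gap tends to 0 along the subsequence
  have hGlim : Tendsto (fun k => G (φ k)) atTop (nhds 0) := by
    rw [Metric.tendsto_atTop]
    intro ε hε
    set ε' := (1 - σ) * ε / (2 * (Dd + 1)) with hε'def
    have hε'pos : 0 < ε' := by
      rw [hε'def]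
      exact div_pos (mul_pos (by linarith) hε) (by linarith)
    clear_value ε'
    have hcb : ContinuousAt (fderiv ℝ f) xstar :=
      hfderiv_cont.continuousAt (hu_open.mem_nhds hxstar_u)
    obtain ⟨r₁, hr₁pos, hr₁⟩ := Metric.continuousAt_iff.1 hcb (ε' / 2) (half_pos hε'pos)
    obtain ⟨r₂, hr₂pos, hr₂⟩ := Metric.isOpen_iff.1 hu_open xstar hxstar_u
    set r := min r₁ r₂ with hrdef
    have hrpos : 0 < r := lt_min hr₁pos hr₂pos
    have hrle1 : r ≤ r₁ := min_le_left _ _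
    have hrle2 : r ≤ r₂ := min_le_right _ _
    clear_value r
    have hball_u : Metric.ball xstar r ⊆ u :=
      subset_trans (Metric.ball_subset_ball hrle2) hr₂
    have hball_f' : ∀ z ∈ Metric.ball xstar r,
        ‖fderiv ℝ f z - fderiv ℝ f xstar‖ < ε' / 2 := by
      intro z hz
      have h1 : dist z xstar < r₁ := lt_of_lt_of_le (Metric.mem_ball.1 hz) hrle1
      have := hr₁ h1
      rwa [dist_eq_norm] at this
    set c := min (β * r / (2 * (Dd + 1))) β with hcdef
    have hcpos : 0 < c :=
      lt_min (div_pos (mul_pos hβ0 hrpos) (by linarith)) hβ0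
    have hcle1 : c ≤ β * r / (2 * (Dd + 1)) := min_le_left _ _
    have hcleβ : c ≤ β := min_le_right _ _
    clear_value c
    obtain ⟨N₁, hN₁⟩ := Metric.tendsto_atTop.1 hconv (r / 2) (by positivity)
    obtain ⟨N₂, hN₂⟩ := Metric.tendsto_atTop.1 (htGlim.comp hφ.tendsto_atTop) (c * ε)
      (mul_pos hcpos hε)
    refine ⟨max N₁ N₂, fun k hk => ?_⟩
    have hk1 : dist (x (φ k)) xstar < r / 2 := hN₁ k (le_trans (le_max_left _ _) hk)
    have hk2 := hN₂ k (le_trans (le_max_right _ _) hk)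
    simp only [Function.comp_apply, Real.dist_eq, sub_zero] at hk2
    rw [abs_of_nonneg (mul_nonneg (pow_pos hβ0 _).le (hGnn (φ k)))] at hk2
    rw [Real.dist_eq, sub_zero, abs_of_nonneg (hGnn (φ k))]
    by_cases hcase : c ≤ β ^ ik (φ k)
    · have h1 : c * G (φ k) ≤ β ^ ik (φ k) * G (φ k) :=
        mul_le_mul_of_nonneg_right hcase (hGnn (φ k))
      have h2 : c * G (φ k) < c * ε := lt_of_le_of_lt h1 hk2
      exact (mul_lt_mul_iff_right₀ hcpos).1 h2
    · push_neg at hcase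
      -- line search failed at ik (φ k) - 1
      have hik1 : 0 < ik (φ k) := by
        rcases Nat.eq_zero_or_pos (ik (φ k)) with h | h
        · exfalso
          rw [h, pow_zero] at hcase
          linarith
        · exact h
      have hfail := (hik (φ k)).2 (ik (φ k) - 1) (Nat.sub_lt hik1 one_pos)
      rw [hgap (φ k)] at hfail
      push_neg at hfail
      set τ := β ^ (ik (φ k) - 1) with hτdef
      have hτpos : 0 < τ := pow_pos hβ0 _
      have hτ1 : τ ≤ 1 := pow_le_one₀ hβ0.le hβ1.le
      clear_value τ
      have htτ : β ^ ik (φ k) = β * τ := by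
        have h4 : ik (φ k) - 1 + 1 = ik (φ k) := Nat.succ_pred_eq_of_pos hik1
        calc β ^ ik (φ k) = β ^ (ik (φ k) - 1 + 1) := by rw [h4]
          _ = β ^ (ik (φ k) - 1) * β := pow_succ β _
          _ = β * τ := by rw [hτdef]; ring
      -- smallness of the trial step
      have hdb : ‖d (φ k)‖ ≤ Dd := hdd k
      have hDd1 : (0:ℝ) < Dd + 1 := by linarith
      have h2' : c * (2 * (Dd + 1)) ≤ β * r := by
        calc c * (2 * (Dd + 1)) ≤ (β * r / (2 * (Dd + 1))) * (2 * (Dd + 1)) :=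
              mul_le_mul_of_nonneg_right hcle1 (by linarith)
          _ = β * r := by field_simp
      have h1 : β * τ < c := by rw [← htτ]; exact hcase
      have h3' : τ * (2 * (Dd + 1)) < r := by
        have h6 : β * τ * (2 * (Dd + 1)) < c * (2 * (Dd + 1)) :=
          mul_lt_mul_of_pos_right h1 (by linarith)
        have h7 : β * (τ * (2 * (Dd + 1))) < β * r := by linarith
        exact lt_of_mul_lt_mul_left h7 hβ0.le
      have hτd : τ * ‖d (φ k)‖ < r / 2 := by
        have h5 : τ * ‖d (φ k)‖ ≤ τ * Dd := mul_le_mul_of_nonneg_left hdb hτpos.le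
        linarith only [h5, h3', hτpos]
      -- membership of trial point and ball facts
      have hxjB : x (φ k) ∈ Metric.ball xstar r :=
        Metric.mem_ball.2 (lt_of_lt_of_le hk1 (by linarith))
      have hyB : x (φ k) + τ • d (φ k) ∈ Metric.ball xstar r := by
        rw [Metric.mem_ball, dist_eq_norm]
        have he : x (φ k) + τ • d (φ k) - xstar = (x (φ k) - xstar) + τ • d (φ k) := by abel
        rw [he]
        have h6 : ‖x (φ k) - xstar‖ < r / 2 := by rw [← dist_eq_norm]; exact hk1
        have h7 : ‖τ • d (φ k)‖ = τ * ‖d (φ k)‖ := by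
          rw [norm_smul, Real.norm_eq_abs, abs_of_pos hτpos]
        calc ‖(x (φ k) - xstar) + τ • d (φ k)‖ ≤ ‖x (φ k) - xstar‖ + ‖τ • d (φ k)‖ :=
              norm_add_le _ _
          _ < r / 2 + r / 2 := by rw [h7]; exact add_lt_add h6 hτd
          _ = r := by ring
      -- mean value inequality
      have hders : ∀ z ∈ Metric.ball xstar r,
          HasFDerivWithinAt f (fderiv ℝ f z) (Metric.ball xstar r) z := by
        intro z hz
        have hz_u := hball_u hz
        have hdiffz : DifferentiableAt ℝ f z :=
          ((hfc1.differentiableOn one_ne_zero) z hz_u).differentiableAt (hu_open.mem_nhds hz_u)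
        exact hdiffz.hasFDerivAt.hasFDerivWithinAt
      have hbound : ∀ z ∈ Metric.ball xstar r,
          ‖fderiv ℝ f z - fderiv ℝ f (x (φ k))‖ ≤ ε' := by
        intro z hz
        have h8 := hball_f' z hz
        have h9 := hball_f' (x (φ k)) hxjB
        calc ‖fderiv ℝ f z - fderiv ℝ f (x (φ k))‖
            ≤ ‖fderiv ℝ f z - fderiv ℝ f xstar‖ + ‖fderiv ℝ f xstar - fderiv ℝ f (x (φ k))‖ :=
              norm_sub_le_norm_sub_add_norm_sub _ _ _
          _ ≤ ε' / 2 + ε' / 2 := by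
              rw [norm_sub_rev (fderiv ℝ f xstar)]
              exact add_le_add h8.le h9.le
          _ = ε' := by ring
      have hmvt := Convex.norm_image_sub_le_of_norm_hasFDerivWithin_le' hders hbound
        (convex_ball xstar r) hxjB hyB
      rw [add_sub_cancel_left] at hmvt
      have hlin : (fderiv ℝ f (x (φ k))) (τ • d (φ k)) = τ * ⟪gradient f (x (φ k)), d (φ k)⟫ := by
        rw [map_smul]
        have h10 : ⟪gradient f (x (φ k)), d (φ k)⟫ = fderiv ℝ f (x (φ k)) (d (φ k)) := by
          rw [hgrad_eq]
          exact InnerProductSpace.toDual_symm_apply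
        rw [h10, smul_eq_mul]
      have hnτd : ‖τ • d (φ k)‖ = τ * ‖d (φ k)‖ := by
        rw [norm_smul, Real.norm_eq_abs, abs_of_pos hτpos]
      rw [hlin, hnτd, Real.norm_eq_abs] at hmvt
      have hfy : f (x (φ k) + τ • d (φ k))
          ≤ f (x (φ k)) + τ * ⟪gradient f (x (φ k)), d (φ k)⟫ + ε' * (τ * ‖d (φ k)‖) := by
        have h11 := (abs_le.1 hmvt).2
        linarith
      -- convexity of g
      have hyeq : x (φ k) + τ • d (φ k) = (1 - τ) • x (φ k) + τ • v (φ k) := by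
        rw [hd]; module
      have hgy : g (x (φ k) + τ • d (φ k)) ≤ (1 - τ) * g (x (φ k)) + τ * g (v (φ k)) := by
        rw [hyeq]
        exact hg_cv.2 (hxs (φ k)) (hv (φ k)).1 (by linarith) hτpos.le (by ring)
      have hinner : ⟪gradient f (x (φ k)), d (φ k)⟫ = -(⟪gradient f (x (φ k)), x (φ k) - v (φ k)⟫) := by
        rw [hd, inner_sub_right, inner_sub_right]
        ring
      -- combine
      have hchain : Fs (φ k) - σ * τ * G (φ k)
          < Fs (φ k) - τ * G (φ k) + ε' * (τ * ‖d (φ k)‖) := by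
        calc Fs (φ k) - σ * τ * G (φ k)
            < f (x (φ k) + τ • d (φ k)) + g (x (φ k) + τ • d (φ k)) := hfail
          _ ≤ (f (x (φ k)) + τ * ⟪gradient f (x (φ k)), d (φ k)⟫ + ε' * (τ * ‖d (φ k)‖))
              + ((1 - τ) * g (x (φ k)) + τ * g (v (φ k))) := add_le_add hfy hgy
          _ = (f (x (φ k)) + g (x (φ k))) - τ * G (φ k) + ε' * (τ * ‖d (φ k)‖) := by
              rw [hinner]; simp only [hGdef]; ring
          _ ≤ Fs (φ k) - τ * G (φ k) + ε' * (τ * ‖d (φ k)‖) := by linarith [hFxFs (φ k)]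
      have h10 : (1 - σ) * (τ * G (φ k)) < ε' * (τ * ‖d (φ k)‖) := by linarith only [hchain]
      have h12 : ε' * (Dd + 1) = (1 - σ) * ε / 2 := by
        rw [hε'def]; field_simp
      have h13 : ε' * (τ * ‖d (φ k)‖) ≤ (1 - σ) * ε / 2 * τ := by
        have h14 : ε' * (τ * ‖d (φ k)‖) ≤ ε' * (τ * (Dd + 1)) :=
          mul_le_mul_of_nonneg_left
            (mul_le_mul_of_nonneg_left (by linarith) hτpos.le) hε'pos.le
        calc ε' * (τ * ‖d (φ k)‖) ≤ ε' * (τ * (Dd + 1)) := h14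
          _ = (ε' * (Dd + 1)) * τ := by ring
          _ = (1 - σ) * ε / 2 * τ := by rw [h12]
      have h15 : G (φ k) < ε / 2 := by
        have hpos : 0 < (1 - σ) * τ := mul_pos (by linarith) hτpos
        have h16 : (1 - σ) * (τ * G (φ k)) < (1 - σ) * ε / 2 * τ := lt_of_lt_of_le h10 h13
        by_contra hcon
        push_neg at hcon
        have h17 : 0 ≤ (1 - σ) * τ * (G (φ k) - ε / 2) :=
          mul_nonneg hpos.le (by linarith)
        linarith only [h16, h17]
      linarith
  -- every w ∈ s gives a nonpositive gap term at xstar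
  have hHle : ∀ w ∈ s, ⟪gradient f xstar, xstar - w⟫ + g xstar - g w ≤ 0 := by
    intro w hw
    by_contra hcon
    push_neg at hcon
    -- three eventually facts
    have hE1 : ∀ᶠ k in atTop,
        G (φ k) < (⟪gradient f xstar, xstar - w⟫ + g xstar - g w) / 3 := by
      obtain ⟨N, hN⟩ := Metric.tendsto_atTop.1 hGlim _ (by linarith : (0:ℝ) <
        (⟪gradient f xstar, xstar - w⟫ + g xstar - g w) / 3)
      refine eventually_atTop.2 ⟨N, fun k hk => ?_⟩
      have := hN k hk
      rw [Real.dist_eq, sub_zero, abs_of_nonneg (hGnn (φ k))] at this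
      exact this
    have hE2 : ∀ᶠ k in atTop,
        ⟪gradient f xstar, xstar - w⟫ - (⟪gradient f xstar, xstar - w⟫ + g xstar - g w) / 3
          < ⟪gradient f (x (φ k)), x (φ k) - w⟫ := by
      have htend : Tendsto (fun k => ⟪gradient f (x (φ k)), x (φ k) - w⟫) atTop
          (nhds ⟪gradient f xstar, xstar - w⟫) :=
        hconva.inner (hconv.sub tendsto_const_nhds)
      exact htend.eventually (eventually_gt_nhds (by linarith))
    have hE3 : ∀ᶠ k in atTop,
        g xstar - (⟪gradient f xstar, xstar - w⟫ + g xstar - g w) / 3 < g (x (φ k)) := by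
      have hts : Tendsto (fun k => x (φ k)) atTop (nhdsWithin xstar s) :=
        tendsto_nhdsWithin_iff.2 ⟨hconv, Filter.Eventually.of_forall fun k => hxs (φ k)⟩
      have hlsc := hg_lsc xstar hxstar_s
        (g xstar - (⟪gradient f xstar, xstar - w⟫ + g xstar - g w) / 3) (by linarith)
      exact hts.eventually hlsc
    obtain ⟨k, ⟨h1, h2⟩, h3⟩ := ((hE1.and hE2).and hE3).exists
    -- lower bound on the gap at x (φ k)
    have h4 : ⟪gradient f (x (φ k)), x (φ k) - w⟫ + g (x (φ k)) - g w ≤ G (φ k) := by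
      have h5 := (hv (φ k)).2 w hw
      simp only [hGdef]
      rw [inner_sub_right, inner_sub_right]
      linarith
    linarith
  -- conclude
  have hbd : BddAbove (Set.range fun w : s =>
      ⟪gradient f xstar, xstar - (w : E)⟫ + g xstar - g (w : E)) :=
    ⟨0, Set.forall_mem_range.2 fun w => hHle w w.2⟩
  rw [show FWgap f g s xstar
      = ⨆ w : s, (⟪gradient f xstar, xstar - (w : E)⟫ + g xstar - g (w : E)) from rfl]
  refine le_antisymm (ciSup_le fun w => hHle w w.2) ?_
  have h6 := le_ciSup hbd (⟨xstar, hxstar_s⟩ : s)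
  simpa using h6
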